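/- For n ≥ m(m-1)/2, the superpartition Λ_min = (m-1, m-2, ..., 1, 0; 1^{n̂}) with n̂ = n - m(m-1)/2 is the unique minimum of the set of superpartitions of degree (n|m) under the dominance order: every superpartition Λ of degree (n|m) satisfies Λ ≥ Λ_min. -/

import Mathlib

/-- A function `ℕ → ℕ` represents a partition: non-increasing and eventually zero. -/
def IsPartitionFn (f : ℕ → ℕ) : Prop :=
  (∀ ⦃i j : ℕ⦄, i ≤ j → f j ≤ f i) ∧ ∃ N, ∀ i, N ≤ i → f i = 0

/-- A superpartition of fermionic degree `m`: a strictly decreasing sequence `a` of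
`m` nonnegative integers together with an ordinary partition `s` (a non-increasing
list of positive integers). -/
structure SuperPartition (m : ℕ) where
  a : Fin m → ℕ
  a_strictAnti : ∀ ⦃i j : Fin m⦄, i < j → a j < a i
  s : List ℕ
  s_sorted : s.Pairwise (· ≥ ·)
  s_pos : ∀ x ∈ s, 0 < x

/-- Sort a finite multiset of naturals into the non-increasing function it defines. -/
def sortFn (ms : Multiset ℕ) : ℕ → ℕ := fun i => (ms.sort (· ≥ ·)).getD i 0

/-- `Λ* = sort(Λᵃ ∪ Λˢ)`. -/
def SuperPartition.starFn {m : ℕ} (Λ : SuperPartition m) : ℕ → ℕ :=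
  sortFn ((List.ofFn Λ.a : Multiset ℕ) + (Λ.s : Multiset ℕ))

/-- `Λ^⊛ = sort((Λᵃ + 1ᵐ) ∪ Λˢ)`. -/
def SuperPartition.circFn {m : ℕ} (Λ : SuperPartition m) : ℕ → ℕ :=
  sortFn ((List.ofFn (fun i => Λ.a i + 1) : Multiset ℕ) + (Λ.s : Multiset ℕ))

/-- The bosonic degree `|Λ|` of a superpartition. -/
def SuperPartition.deg {m : ℕ} (Λ : SuperPartition m) : ℕ :=
  (∑ i, Λ.a i) + Λ.s.sum

/-- `f` dominates `g`: all partial sums of `f` are at least those of `g`. -/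
def Dominates (f g : ℕ → ℕ) : Prop :=
  ∀ k, ∑ i ∈ Finset.range k, g i ≤ ∑ i ∈ Finset.range k, f i

/-- Dominance order on superpartitions: `Λ ≥ Ω` iff they have the same degrees and
`Λ* ≥ Ω*`, `Λ^⊛ ≥ Ω^⊛` in dominance order. -/
def SuperDom {m : ℕ} (Λ Ω : SuperPartition m) : Prop :=
  Λ.deg = Ω.deg ∧ Dominates Λ.starFn Ω.starFn ∧ Dominates Λ.circFn Ω.circFn

/-- The superpartition `Λ_min = (m-1, m-2, …, 1, 0 ; 1^nh)`. -/
def LambdaMin (m nh : ℕ) : SuperPartition m where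
  a := fun i => m - 1 - (i : ℕ)
  a_strictAnti := by
    intro i j h
    have hj : (j : ℕ) < m := j.isLt
    have h' : (i : ℕ) < (j : ℕ) := h
    show m - 1 - (j : ℕ) < m - 1 - (i : ℕ)
    omega
  s := List.replicate nh 1
  s_sorted := List.pairwise_replicate.mpr (by simp)
  s_pos := by
    intro x hx
    have := List.eq_of_mem_replicate hx
    omega

/-! ### Auxiliary lemmas -/

section Aux

lemma getD_len_le (l : List ℕ) {i : ℕ} (h : l.length ≤ i) : l.getD i 0 = 0 := by
  simp [List.getD_eq_getElem?_getD, List.getElem?_eq_none h]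

lemma sorted_getD_anti {l : List ℕ} (hl : l.Pairwise (· ≥ ·)) {i j : ℕ} (h : i ≤ j) :
    l.getD j 0 ≤ l.getD i 0 := by
  by_cases hj : j < l.length
  · have hi : i < l.length := lt_of_le_of_lt h hj
    rw [List.getD_eq_getElem _ _ hj, List.getD_eq_getElem _ _ hi]
    rcases eq_or_lt_of_le h with rfl | hlt
    · exact le_refl _
    · exact hl.rel_get_of_lt (a := ⟨i, hi⟩) (b := ⟨j, hj⟩) hlt
  · rw [getD_len_le l (not_lt.1 hj)]; exact Nat.zero_le _

lemma getD_le_of_countP {l : List ℕ} (hl : l.Pairwise (· ≥ ·)) {v i : ℕ}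
    (h : l.countP (fun x => decide (v < x)) ≤ i) : l.getD i 0 ≤ v := by
  induction l generalizing i with
  | nil => simp
  | cons a t ih =>
    have hs : t.Pairwise (· ≥ ·) := hl.of_cons
    cases i with
    | zero =>
      simp only [Nat.le_zero, List.countP_cons] at h
      have : ¬ (v < a) := by
        intro hva
        simp [hva] at h
      simpa using not_lt.1 this
    | succ i =>
      simp only [List.getD_cons_succ]
      apply ih hs
      by_cases hva : v < a
      · have := h
        rw [List.countP_cons] at this
        simp [hva] at this
        omega
      · have : t.countP (fun x => decide (v < x)) = 0 := by
          rw [List.countP_eq_zero]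
          intro x hx
          have hax : a ≥ x := List.rel_of_pairwise_cons hl hx
          simp only [decide_eq_true_eq]
          omega
        omega

lemma le_getD_of_countP {l : List ℕ} (hl : l.Pairwise (· ≥ ·)) {v i : ℕ}
    (h : i < l.countP (fun x => decide (v ≤ x))) : v ≤ l.getD i 0 := by
  induction l generalizing i with
  | nil => simp at h
  | cons a t ih =>
    have hs : t.Pairwise (· ≥ ·) := hl.of_cons
    cases i with
    | zero =>
      simp only [List.getD_cons_zero]
      by_contra hva
      push_neg at hva
      have h1 : t.countP (fun x => decide (v ≤ x)) = 0 := by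
        rw [List.countP_eq_zero]
        intro x hx
        have hax : a ≥ x := List.rel_of_pairwise_cons hl hx
        simp only [decide_eq_true_eq]
        omega
      rw [List.countP_cons] at h
      simp only [h1] at h
      have : ¬ (v ≤ a) := by omega
      simp [this] at h
    | succ i =>
      simp only [List.getD_cons_succ]
      apply ih hs
      rw [List.countP_cons] at h
      have hle : (if decide (v ≤ a) = true then 1 else 0) ≤ 1 := by split <;> omega
      omega

lemma sum_range_getD (l : List ℕ) : ∀ {k : ℕ}, l.length ≤ k →
    ∑ i ∈ Finset.range k, l.getD i 0 = l.sum := by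
  induction l with
  | nil => intro k _; simp
  | cons a t ih =>
    intro k hk
    simp only [List.length_cons] at hk
    obtain ⟨k', rfl⟩ : ∃ k', k = k' + 1 := ⟨k - 1, by omega⟩
    rw [Finset.sum_range_succ']
    simp only [List.getD_cons_succ, List.getD_cons_zero, List.sum_cons]
    rw [ih (by omega)]
    ring

lemma countP_ofFn_eq {m : ℕ} (g : Fin m → ℕ) (p : ℕ → Bool) :
    (List.ofFn g).countP p = (Finset.univ.filter (fun j : Fin m => p (g j))).card := by
  rw [List.ofFn_eq_map, List.countP_map, List.countP_eq_length_filter]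
  have hnd : ((List.finRange m).filter (p ∘ g)).Nodup :=
    (List.nodup_finRange m).filter _
  rw [← List.toFinset_card_of_nodup hnd, List.toFinset_filter, List.toFinset_finRange]
  rfl

lemma countP_ofFn_le {m : ℕ} (g : Fin m → ℕ) (p : ℕ → Bool) {i : ℕ}
    (h : ∀ j : Fin m, p (g j) → (j : ℕ) < i) :
    (List.ofFn g).countP p ≤ i := by
  rw [countP_ofFn_eq]
  calc (Finset.univ.filter (fun j : Fin m => p (g j))).card
      = ((Finset.univ.filter (fun j : Fin m => p (g j))).image Fin.val).card := by
        rw [Finset.card_image_of_injective _ Fin.val_injective]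
    _ ≤ (Finset.range i).card := by
        apply Finset.card_le_card
        intro x hx
        simp only [Finset.mem_image, Finset.mem_filter] at hx
        obtain ⟨j, ⟨_, hj⟩, rfl⟩ := hx
        exact Finset.mem_range.2 (h j hj)
    _ = i := Finset.card_range i

lemma le_countP_ofFn {m : ℕ} (g : Fin m → ℕ) (p : ℕ → Bool) {i : ℕ} (hi : i < m)
    (h : ∀ j : Fin m, (j : ℕ) ≤ i → p (g j)) :
    i + 1 ≤ (List.ofFn g).countP p := by
  rw [countP_ofFn_eq]
  calc i + 1 = (Finset.range (i+1)).card := (Finset.card_range _).symm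
    _ = ((Finset.univ.filter (fun j : Fin m => (j : ℕ) ≤ i)).image Fin.val).card := by
        congr 1
        ext x
        simp only [Finset.mem_range, Finset.mem_image, Finset.mem_filter, Finset.mem_univ,
          true_and]
        constructor
        · intro hx
          refine ⟨⟨x, by omega⟩, ?_, rfl⟩
          simpa using (by omega : x ≤ i)
        · rintro ⟨j, hj, rfl⟩; omega
    _ = (Finset.univ.filter (fun j : Fin m => (j : ℕ) ≤ i)).card :=
        Finset.card_image_of_injective _ Fin.val_injective
    _ ≤ _ := by
        apply Finset.card_le_card
        intro j hj
        simp only [Finset.mem_filter, Finset.mem_univ, true_and] at hj ⊢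
        exact h j hj

lemma sort_add_perm (l₁ l₂ : List ℕ) :
    ((↑l₁ + ↑l₂ : Multiset ℕ).sort (· ≥ ·)).Perm (l₁ ++ l₂) := by
  rw [← Multiset.coe_eq_coe, Multiset.sort_eq]
  simp

lemma countP_sort_add (l₁ l₂ : List ℕ) (p : ℕ → Bool) :
    ((↑l₁ + ↑l₂ : Multiset ℕ).sort (· ≥ ·)).countP p = l₁.countP p + l₂.countP p := by
  rw [(sort_add_perm l₁ l₂).countP_eq, List.countP_append]

lemma length_sort_add (l₁ l₂ : List ℕ) :
    ((↑l₁ + ↑l₂ : Multiset ℕ).sort (· ≥ ·)).length = l₁.length + l₂.length := by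
  rw [(sort_add_perm l₁ l₂).length_eq, List.length_append]

lemma sum_sort_add (l₁ l₂ : List ℕ) :
    ((↑l₁ + ↑l₂ : Multiset ℕ).sort (· ≥ ·)).sum = l₁.sum + l₂.sum := by
  rw [(sort_add_perm l₁ l₂).sum_eq, List.sum_append]

lemma sortFn_anti (M : Multiset ℕ) {i j : ℕ} (h : i ≤ j) : sortFn M j ≤ sortFn M i :=
  sorted_getD_anti (Multiset.pairwise_sort _ _) h

lemma sortFn_add_zero (l₁ l₂ : List ℕ) {i : ℕ} (h : l₁.length + l₂.length ≤ i) :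
    sortFn (↑l₁ + ↑l₂) i = 0 := by
  apply getD_len_le
  rw [length_sort_add]
  exact h

lemma sum_sortFn_add (l₁ l₂ : List ℕ) {k : ℕ} (h : l₁.length + l₂.length ≤ k) :
    ∑ i ∈ Finset.range k, sortFn (↑l₁ + ↑l₂) i = l₁.sum + l₂.sum := by
  unfold sortFn
  rw [sum_range_getD _ (by rw [length_sort_add]; exact h), sum_sort_add]

/-! strictly decreasing sequences -/

lemma sa_step {m : ℕ} {a : Fin m → ℕ} (h : ∀ ⦃i j : Fin m⦄, i < j → a j < a i) :
    ∀ (d : ℕ) (i j : Fin m), (i : ℕ) + d = (j : ℕ) → a j + d ≤ a i := by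
  intro d
  induction d with
  | zero =>
    intro i j hij
    have : i = j := Fin.ext (by omega)
    subst this
    omega
  | succ d ih =>
    intro i j hij
    have hd : (i : ℕ) + d < m := by have := j.isLt; omega
    have h1 := ih i ⟨(i : ℕ) + d, hd⟩ (by simp)
    have h2 : a j < a ⟨(i : ℕ) + d, hd⟩ := h (by rw [Fin.lt_def]; simp; omega)
    omega

lemma sa_ge {m : ℕ} {a : Fin m → ℕ} (h : ∀ ⦃i j : Fin m⦄, i < j → a j < a i)
    (i : Fin m) : m - 1 - (i : ℕ) ≤ a i := by
  have hm : 0 < m := i.pos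
  have hi := i.isLt
  have := sa_step h (m - 1 - (i : ℕ)) i ⟨m - 1, by omega⟩ (by simp; omega)
  omega

lemma sa_le {m : ℕ} {a : Fin m → ℕ} (h : ∀ ⦃i j : Fin m⦄, i < j → a j < a i)
    (i : Fin m) : a i + (i : ℕ) ≤ a ⟨0, i.pos⟩ := by
  exact sa_step h (i : ℕ) ⟨0, i.pos⟩ i (by simp)

/-! the minimal partition function -/

def gfun (c nh i : ℕ) : ℕ := if i < c + nh then max (c - i) 1 else 0

lemma gauss (c : ℕ) : ∑ i ∈ Finset.range c, (c - i) = c * (c + 1) / 2 := by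
  have h1 : ∑ j ∈ Finset.range c, (c - 1 - j + 1) = ∑ j ∈ Finset.range c, (j + 1) :=
    Finset.sum_range_reflect (fun j => j + 1) c
  have h2 : ∑ i ∈ Finset.range c, (c - i) = ∑ j ∈ Finset.range c, (c - 1 - j + 1) := by
    apply Finset.sum_congr rfl
    intro i hi
    have := Finset.mem_range.1 hi
    omega
  have h3 : ∑ j ∈ Finset.range c, (j + 1) = (∑ j ∈ Finset.range c, j) + c := by
    rw [Finset.sum_add_distrib]
    simp
  have h4 := Finset.sum_range_id_mul_two c
  have h5 : c * (c + 1) = c * (c - 1) + 2 * c := by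
    cases c with
    | zero => rfl
    | succ c' =>
      have h : c' + 1 - 1 = c' := rfl
      rw [h]
      ring
  omega

lemma gsum (c nh : ℕ) : ∀ {K : ℕ}, c + nh ≤ K →
    ∑ i ∈ Finset.range K, gfun c nh i = c * (c + 1) / 2 + nh := by
  have key : ∀ nh, ∑ i ∈ Finset.range (c + nh), gfun c nh i = c * (c + 1) / 2 + nh := by
    intro nh
    induction nh with
    | zero =>
      simp only [Nat.add_zero]
      rw [← gauss c]
      apply Finset.sum_congr rfl
      intro i hi
      have := Finset.mem_range.1 hi
      simp only [gfun, if_pos (by omega : i < c + 0)]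
      omega
    | succ k ih =>
      have : c + (k + 1) = (c + k) + 1 := by omega
      rw [this, Finset.sum_range_succ]
      have h1 : gfun c (k+1) (c + k) = 1 := by
        simp only [gfun, if_pos (by omega : c + k < c + (k+1))]
        omega
      have h2 : ∑ i ∈ Finset.range (c + k), gfun c (k+1) i
          = ∑ i ∈ Finset.range (c + k), gfun c k i := by
        apply Finset.sum_congr rfl
        intro i hi
        have := Finset.mem_range.1 hi
        simp only [gfun, if_pos (by omega : i < c + (k+1)), if_pos (by omega : i < c + k)]
      rw [h1, h2, ih]
      omega
  intro K hK
  rw [← key nh]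
  symm
  apply Finset.sum_subset (Finset.range_subset_range.2 hK)
  intro x _ hx
  have hx' : ¬ x < c + nh := fun h => hx (Finset.mem_range.2 h)
  simp [gfun, hx']

lemma dom_min (c nh : ℕ) (f : ℕ → ℕ)
    (hmono : ∀ i j : ℕ, i ≤ j → f j ≤ f i)
    (N : ℕ) (hzero : ∀ i, N ≤ i → f i = 0)
    (hsum : ∑ i ∈ Finset.range N, f i = c * (c + 1) / 2 + nh)
    (hlb : ∀ i, c - i ≤ f i) (k : ℕ) :
    ∑ i ∈ Finset.range k, gfun c nh i ≤ ∑ i ∈ Finset.range k, f i := by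
  set S := c * (c + 1) / 2 + nh with hS
  by_cases hc : S ≤ ∑ i ∈ Finset.range k, f i
  · calc ∑ i ∈ Finset.range k, gfun c nh i
        ≤ ∑ i ∈ Finset.range (max k (c + nh)), gfun c nh i := by
          apply Finset.sum_le_sum_of_subset
          exact Finset.range_subset_range.2 (le_max_left _ _)
      _ = S := gsum c nh (le_max_right _ _)
      _ ≤ _ := hc
  · push_neg at hc
    set K := max k N with hK
    have hsumK : ∑ i ∈ Finset.range K, f i = S := by
      rw [← hsum]
      symm
      apply Finset.sum_subset (Finset.range_subset_range.2 (le_max_right _ _))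
      intro x _ hx
      exact hzero x (le_of_not_gt (fun h => hx (Finset.mem_range.2 h)))
    have hkK : k ≤ K := le_max_left _ _
    have hsplit : ∑ i ∈ Finset.range K, f i
        = ∑ i ∈ Finset.range k, f i + ∑ i ∈ Finset.Ico k K, f i := by
      rw [Finset.range_eq_Ico, Finset.range_eq_Ico]
      exact (Finset.sum_Ico_consecutive f (Nat.zero_le k) hkK).symm
    have hpos : 0 < ∑ i ∈ Finset.Ico k K, f i := by omega
    obtain ⟨j, hj, hfj⟩ : ∃ j ∈ Finset.Ico k K, f j ≠ 0 := by
      by_contra hall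
      push_neg at hall
      have : ∑ i ∈ Finset.Ico k K, f i = 0 := Finset.sum_eq_zero hall
      omega
    have hjk : k ≤ j := (Finset.mem_Ico.1 hj).1
    apply Finset.sum_le_sum
    intro i hi
    have hik : i < k := Finset.mem_range.1 hi
    have h1 : 1 ≤ f i := by
      have := hmono i j (by omega)
      omega
    have h2 := hlb i
    simp only [gfun]
    split
    · omega
    · omega

end Aux

/-! ### Facts about `starFn` and `circFn` -/

section StarCirc

variable {m : ℕ} (Λ : SuperPartition m)

lemma sp_star_mono : ∀ i j : ℕ, i ≤ j → Λ.starFn j ≤ Λ.starFn i :=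
  fun _ _ h => sortFn_anti _ h

lemma sp_circ_mono : ∀ i j : ℕ, i ≤ j → Λ.circFn j ≤ Λ.circFn i :=
  fun _ _ h => sortFn_anti _ h

lemma sp_star_zero : ∀ i, m + Λ.s.length ≤ i → Λ.starFn i = 0 := by
  intro i hi
  apply sortFn_add_zero
  simpa using hi

lemma sp_circ_zero : ∀ i, m + Λ.s.length ≤ i → Λ.circFn i = 0 := by
  intro i hi
  apply sortFn_add_zero
  simpa using hi

lemma sp_star_sum {k : ℕ} (h : m + Λ.s.length ≤ k) :
    ∑ i ∈ Finset.range k, Λ.starFn i = Λ.deg := by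
  show ∑ i ∈ Finset.range k, sortFn _ i = _
  rw [sum_sortFn_add _ _ (by simpa using h), List.sum_ofFn]
  rfl

lemma sp_circ_sum {k : ℕ} (h : m + Λ.s.length ≤ k) :
    ∑ i ∈ Finset.range k, Λ.circFn i = Λ.deg + m := by
  show ∑ i ∈ Finset.range k, sortFn _ i = _
  rw [sum_sortFn_add _ _ (by simpa using h), List.sum_ofFn]
  have : ∑ i : Fin m, (Λ.a i + 1) = (∑ i, Λ.a i) + m := by
    rw [Finset.sum_add_distrib]
    simp
  rw [this]
  show (∑ i, Λ.a i) + m + Λ.s.sum = ((∑ i, Λ.a i) + Λ.s.sum) + m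
  ring

lemma sp_star_lb (i : ℕ) : m - 1 - i ≤ Λ.starFn i := by
  rcases Nat.eq_zero_or_pos (m - 1 - i) with h0 | hpos
  · omega
  · have him : i < m := by omega
    show m - 1 - i ≤ (Multiset.sort _ (· ≥ ·)).getD i 0
    apply le_getD_of_countP (Multiset.pairwise_sort _ _)
    rw [countP_sort_add]
    have h1 : i + 1 ≤ (List.ofFn Λ.a).countP (fun x => decide (m - 1 - i ≤ x)) := by
      apply le_countP_ofFn _ _ him
      intro j hj
      have := sa_ge Λ.a_strictAnti j
      simp only [decide_eq_true_eq]
      omega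
    omega

lemma sp_circ_lb (i : ℕ) : m - i ≤ Λ.circFn i := by
  rcases Nat.eq_zero_or_pos (m - i) with h0 | hpos
  · omega
  · have him : i < m := by omega
    show m - i ≤ (Multiset.sort _ (· ≥ ·)).getD i 0
    apply le_getD_of_countP (Multiset.pairwise_sort _ _)
    rw [countP_sort_add]
    have h1 : i + 1 ≤ (List.ofFn (fun j => Λ.a j + 1)).countP
        (fun x => decide (m - i ≤ x)) := by
      apply le_countP_ofFn _ _ him
      intro j hj
      have := sa_ge Λ.a_strictAnti j
      have hjm := j.isLt
      simp only [decide_eq_true_eq]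
      omega
    omega

end StarCirc

/-! ### The minimal superpartition -/

section Lmin

lemma lmin_a (m nh : ℕ) (i : Fin m) : (LambdaMin m nh).a i = m - 1 - (i : ℕ) := rfl

lemma lmin_s (m nh : ℕ) : (LambdaMin m nh).s = List.replicate nh 1 := rfl

lemma lmin_star_le (m nh : ℕ) (i : ℕ) : (LambdaMin m nh).starFn i ≤ gfun (m - 1) nh i := by
  by_cases hi : i < (m - 1) + nh
  · rw [gfun, if_pos hi]
    show (Multiset.sort _ (· ≥ ·)).getD i 0 ≤ _
    apply getD_le_of_countP (Multiset.pairwise_sort _ _)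
    rw [countP_sort_add]
    have h1 : ((LambdaMin m nh).s).countP
        (fun x => decide (max (m - 1 - i) 1 < x)) = 0 := by
      rw [lmin_s, List.countP_eq_zero]
      intro x hx
      have := List.eq_of_mem_replicate hx
      simp only [decide_eq_true_eq]
      omega
    have h2 : (List.ofFn (LambdaMin m nh).a).countP
        (fun x => decide (max (m - 1 - i) 1 < x)) ≤ i := by
      apply countP_ofFn_le
      intro j hj
      rw [lmin_a] at hj
      simp only [decide_eq_true_eq] at hj
      have := j.isLt
      omega
    omega
  · rw [gfun, if_neg hi]
    have h0 : (LambdaMin m nh).starFn i ≤ 0 := by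
      show (Multiset.sort _ (· ≥ ·)).getD i 0 ≤ _
      apply getD_le_of_countP (Multiset.pairwise_sort _ _)
      rw [countP_sort_add]
      have h1 : ((LambdaMin m nh).s).countP (fun x => decide (0 < x)) ≤ nh := by
        calc ((LambdaMin m nh).s).countP (fun x => decide (0 < x))
            ≤ ((LambdaMin m nh).s).length := List.countP_le_length
          _ = nh := by rw [lmin_s, List.length_replicate]
      have h2 : (List.ofFn (LambdaMin m nh).a).countP (fun x => decide (0 < x)) ≤ m - 1 := by
        apply countP_ofFn_le
        intro j hj
        rw [lmin_a] at hj
        simp only [decide_eq_true_eq] at hj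
        omega
      omega
    omega

lemma lmin_circ_le (m nh : ℕ) (i : ℕ) : (LambdaMin m nh).circFn i ≤ gfun m nh i := by
  by_cases hi : i < m + nh
  · rw [gfun, if_pos hi]
    show (Multiset.sort _ (· ≥ ·)).getD i 0 ≤ _
    apply getD_le_of_countP (Multiset.pairwise_sort _ _)
    rw [countP_sort_add]
    have h1 : ((LambdaMin m nh).s).countP
        (fun x => decide (max (m - i) 1 < x)) = 0 := by
      rw [lmin_s, List.countP_eq_zero]
      intro x hx
      have := List.eq_of_mem_replicate hx
      simp only [decide_eq_true_eq]
      omega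
    have h2 : (List.ofFn (fun j => (LambdaMin m nh).a j + 1)).countP
        (fun x => decide (max (m - i) 1 < x)) ≤ i := by
      apply countP_ofFn_le
      intro j hj
      simp only [lmin_a, decide_eq_true_eq] at hj
      have hj' : max (m - i) 1 < m - 1 - (j : ℕ) + 1 := by simpa [lmin_a] using hj
      have := j.isLt
      omega
    omega
  · rw [gfun, if_neg hi]
    rw [sp_circ_zero _ i (by rw [lmin_s, List.length_replicate]; omega)]

lemma lmin_deg (m nh : ℕ) : (LambdaMin m nh).deg = m * (m - 1) / 2 + nh := by
  show (∑ i : Fin m, (m - 1 - (i : ℕ))) + (List.replicate nh 1).sum = _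
  have hs : (List.replicate nh 1).sum = nh := by
    rw [List.sum_replicate]
    simp
  rw [hs, Fin.sum_univ_eq_sum_range]
  have h2 : ∑ i ∈ Finset.range m, (m - 1 - i) = ∑ i ∈ Finset.range m, i :=
    Finset.sum_range_reflect id m
  have h4 := Finset.sum_range_id_mul_two m
  omega

end Lmin

/-! ### Main theorem -/

lemma SuperPartition.ext' {m : ℕ} {Λ Ω : SuperPartition m}
    (h1 : Λ.a = Ω.a) (h2 : Λ.s = Ω.s) : Λ = Ω := by
  cases Λ; cases Ω
  simp only at h1 h2
  subst h1; subst h2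
  rfl

lemma len_le_of_getD {l₁ l₂ : List ℕ} (hp₁ : ∀ x ∈ l₁, 0 < x)
    (h : ∀ i, l₁.getD i 0 = l₂.getD i 0) : l₁.length ≤ l₂.length := by
  by_contra hlt
  push_neg at hlt
  have h1 : l₂.getD l₂.length 0 = 0 := getD_len_le _ le_rfl
  have h2 : 0 < l₁.getD l₂.length 0 := by
    rw [List.getD_eq_getElem _ _ hlt]
    exact hp₁ _ (List.getElem_mem _)
  rw [h _] at h2
  omega

lemma eq_of_getD_pos {l₁ l₂ : List ℕ} (hp₁ : ∀ x ∈ l₁, 0 < x) (hp₂ : ∀ x ∈ l₂, 0 < x)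
    (h : ∀ i, l₁.getD i 0 = l₂.getD i 0) : l₁ = l₂ := by
  have hlen : l₁.length = l₂.length :=
    le_antisymm (len_le_of_getD hp₁ h) (len_le_of_getD hp₂ (fun i => (h i).symm))
  apply List.ext_getElem hlen
  intro i hi1 hi2
  have := h i
  rwa [List.getD_eq_getElem _ _ hi1, List.getD_eq_getElem _ _ hi2] at this

theorem stmt4 (m n : ℕ) (hn : m * (m - 1) / 2 ≤ n) :
    (LambdaMin m (n - m * (m - 1) / 2)).deg = n ∧
    (∀ Λ : SuperPartition m, Λ.deg = n →
      SuperDom Λ (LambdaMin m (n - m * (m - 1) / 2))) ∧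
    (∀ Ω : SuperPartition m, Ω.deg = n →
      (∀ Λ : SuperPartition m, Λ.deg = n → SuperDom Λ Ω) →
      Ω = LambdaMin m (n - m * (m - 1) / 2)) := by
  set nh := n - m * (m - 1) / 2 with hnh
  have hdegmin : (LambdaMin m nh).deg = n := by
    rw [lmin_deg]; omega
  have part2 : ∀ Λ : SuperPartition m, Λ.deg = n → SuperDom Λ (LambdaMin m nh) := by
    intro Λ hΛ
    refine ⟨by rw [hΛ, hdegmin], ?_, ?_⟩
    · intro k
      have hmul : (m - 1) * (m - 1 + 1) = m * (m - 1) := by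
        cases m with
        | zero => rfl
        | succ m' =>
          have h : m' + 1 - 1 = m' := rfl
          rw [h]
          ring
      calc ∑ i ∈ Finset.range k, (LambdaMin m nh).starFn i
          ≤ ∑ i ∈ Finset.range k, gfun (m - 1) nh i :=
            Finset.sum_le_sum (fun i _ => lmin_star_le m nh i)
        _ ≤ ∑ i ∈ Finset.range k, Λ.starFn i := by
            apply dom_min (m - 1) nh Λ.starFn (sp_star_mono Λ) (m + Λ.s.length)
              (sp_star_zero Λ) ?_ (sp_star_lb Λ)
            rw [sp_star_sum Λ le_rfl, hΛ]
            omega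
    · intro k
      have hmul : m * (m + 1) = m * (m - 1) + 2 * m := by
        cases m with
        | zero => rfl
        | succ m' =>
          have h : m' + 1 - 1 = m' := rfl
          rw [h]
          ring
      calc ∑ i ∈ Finset.range k, (LambdaMin m nh).circFn i
          ≤ ∑ i ∈ Finset.range k, gfun m nh i :=
            Finset.sum_le_sum (fun i _ => lmin_circ_le m nh i)
        _ ≤ ∑ i ∈ Finset.range k, Λ.circFn i := by
            apply dom_min m nh Λ.circFn (sp_circ_mono Λ) (m + Λ.s.length)
              (sp_circ_zero Λ) ?_ (sp_circ_lb Λ)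
            rw [sp_circ_sum Λ le_rfl, hΛ]
            omega
  refine ⟨hdegmin, part2, ?_⟩
  intro Ω hΩ hdom
  have h1 := hdom (LambdaMin m nh) hdegmin
  have h2 := part2 Ω hΩ
  have hcirc : Ω.circFn = (LambdaMin m nh).circFn := by
    funext k
    have e1 : ∀ j, ∑ i ∈ Finset.range j, Ω.circFn i
        = ∑ i ∈ Finset.range j, (LambdaMin m nh).circFn i :=
      fun j => le_antisymm (h1.2.2 j) (h2.2.2 j)
    have ek := e1 (k + 1)
    have ek' := e1 k
    rw [Finset.sum_range_succ, Finset.sum_range_succ] at ek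
    omega
  set M₁ := ((List.ofFn (fun i => Ω.a i + 1) : Multiset ℕ) + (Ω.s : Multiset ℕ)) with hM₁
  set M₂ := ((List.ofFn (fun i => (LambdaMin m nh).a i + 1) : Multiset ℕ)
    + ((LambdaMin m nh).s : Multiset ℕ)) with hM₂
  have hMem₁ : ∀ x ∈ Multiset.sort M₁ (· ≥ ·), 0 < x := by
    intro x hx
    rw [Multiset.mem_sort, hM₁, Multiset.mem_add] at hx
    rcases hx with hx | hx
    · rw [Multiset.mem_coe, List.mem_ofFn] at hx
      obtain ⟨i, hi⟩ := hx
      omega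
    · exact Ω.s_pos x (Multiset.mem_coe.1 hx)
  have hMem₂ : ∀ x ∈ Multiset.sort M₂ (· ≥ ·), 0 < x := by
    intro x hx
    rw [Multiset.mem_sort, hM₂, Multiset.mem_add] at hx
    rcases hx with hx | hx
    · rw [Multiset.mem_coe, List.mem_ofFn] at hx
      obtain ⟨i, hi⟩ := hx
      omega
    · exact (LambdaMin m nh).s_pos x (Multiset.mem_coe.1 hx)
  have hgetD : ∀ i, (Multiset.sort M₁ (· ≥ ·)).getD i 0
      = (Multiset.sort M₂ (· ≥ ·)).getD i 0 := fun i => congrFun hcirc i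
  have hlists : Multiset.sort M₁ (· ≥ ·) = Multiset.sort M₂ (· ≥ ·) :=
    eq_of_getD_pos hMem₁ hMem₂ hgetD
  have hMeq : M₁ = M₂ := by
    rw [← Multiset.sort_eq M₁ (· ≥ ·), hlists, Multiset.sort_eq]
  have ha : Ω.a = (LambdaMin m nh).a := by
    funext i
    have hm : 0 < m := i.pos
    have hmem : (Ω.a ⟨0, i.pos⟩ + 1) ∈ M₂ := by
      rw [← hMeq, hM₁, Multiset.mem_add]
      left
      rw [Multiset.mem_coe, List.mem_ofFn]
      exact ⟨⟨0, i.pos⟩, rfl⟩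
    have hub : Ω.a ⟨0, i.pos⟩ + 1 ≤ m := by
      rw [hM₂, Multiset.mem_add] at hmem
      rcases hmem with hx | hx
      · rw [Multiset.mem_coe, List.mem_ofFn] at hx
        obtain ⟨j, hj⟩ := hx
        rw [lmin_a] at hj
        have := j.isLt
        omega
      · rw [lmin_s] at hx
        have := List.eq_of_mem_replicate (Multiset.mem_coe.1 hx)
        omega
    have hge := sa_ge Ω.a_strictAnti i
    have hle := sa_le Ω.a_strictAnti i
    rw [lmin_a]
    have := i.isLt
    omega
  have hofn : (List.ofFn (fun i => Ω.a i + 1))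
      = (List.ofFn (fun i => (LambdaMin m nh).a i + 1)) := by
    rw [ha]
  have hs : (Ω.s : Multiset ℕ) = ((LambdaMin m nh).s : Multiset ℕ) := by
    have h := hMeq
    rw [hM₁, hM₂, hofn] at h
    exact add_left_cancel h
  have hs' : Ω.s = (LambdaMin m nh).s :=
    List.Perm.eq_of_pairwise' Ω.s_sorted (LambdaMin m nh).s_sorted (Multiset.coe_eq_coe.1 hs)
  exact SuperPartition.ext' ha hs'
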